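/- Let F be a field, n, k, m, D ∈ ℕ with k ≥ 2 and m ≥ 1, and let w = {(α_j, β_j)}_{j∈[n]} ⊆ F² with α_1, …, α_n pairwise distinct. Let Q(X,Y) ∈ F[X,Y] be a nonzero polynomial of (1,k−1)-degree at most D that vanishes with multiplicity at least m at every point (α_j, β_j), j ∈ [n]. Let f(X) ∈ F[X] have degree at most k−1 and set t = #{j ∈ [n] : f(α_j) = β_j}. If m·t > D, then Q(X, f(X)) is the zero polynomial; equivalently, (Y − f(X)) divides Q(X,Y) in F[X,Y]. -/

import Mathlib

/-!
STATEMENT 3: Let F be a field, n, k, m, D ∈ ℕ with k ≥ 2 and m ≥ 1, and let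
w = {(α_j, β_j)}_{j∈[n]} ⊆ F² with α_1, …, α_n pairwise distinct. Let Q(X,Y) ∈ F[X,Y] be a
nonzero polynomial of (1,k−1)-degree at most D that vanishes with multiplicity at least m at
every point (α_j, β_j), j ∈ [n]. Let f(X) ∈ F[X] have degree at most k−1 and set
t = #{j ∈ [n] : f(α_j) = β_j}. If m·t > D, then Q(X, f(X)) is the zero polynomial;
equivalently, (Y − f(X)) divides Q(X,Y) in F[X,Y].

Bivariate polynomials in F[X,Y] are represented as `Polynomial (Polynomial F)` with outer
variable Y and inner variable X; the coefficient of X^i·Y^j in Q is `(Q.coeff j).coeff i`.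
-/

/-- The shifted bivariate polynomial `Q(X+α, Y+β)`. -/
noncomputable def taylorShift2 {F : Type*} [CommRing F] (Q : Polynomial (Polynomial F))
    (α β : F) : Polynomial (Polynomial F) :=
  (Q.comp (Polynomial.X + Polynomial.C (Polynomial.C β))).map
    (Polynomial.eval₂RingHom Polynomial.C (Polynomial.X + Polynomial.C α))

/-- `Q` vanishes with multiplicity at least `m` at `(α,β)`:  all Hasse derivatives of order
less than `m` vanish at `(α,β)`, i.e. all coefficients of monomials `X^{e1}·Y^{e2}` with
`e1 + e2 < m` of `Q(X+α, Y+β)` are zero. -/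
def VanishesWithMult {F : Type*} [CommRing F] (Q : Polynomial (Polynomial F))
    (α β : F) (m : ℕ) : Prop :=
  ∀ e1 e2 : ℕ, e1 + e2 < m → ((taylorShift2 Q α β).coeff e2).coeff e1 = 0

namespace Statement3Aux

open Polynomial

theorem shift_eval {F : Type*} [CommRing F] (Q : Polynomial (Polynomial F)) (α β : F)
    (f : Polynomial F) :
    (Polynomial.eval f Q).comp (X + C α)
      = Polynomial.eval (f.comp (X + C α) - C β) (taylorShift2 Q α β) := by
  set φ : Polynomial F →+* Polynomial F := eval₂RingHom Polynomial.C (X + C α) with hφ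
  set p : Polynomial F := f.comp (X + C α) - C β with hp
  have hLHS : (Polynomial.eval f Q).comp (X + C α) = Q.eval₂ φ (f.comp (X + C α)) := by
    have : Polynomial.eval f Q = Q.eval₂ (RingHom.id _) f := rfl
    rw [this]
    have h := Polynomial.hom_eval₂ Q (RingHom.id (Polynomial F)) φ f
    simpa [Polynomial.comp, hφ] using h
  rw [hLHS]
  unfold taylorShift2
  rw [Polynomial.eval_map]
  have h2 := Polynomial.hom_eval₂ Q (Polynomial.C : Polynomial F →+* Polynomial (Polynomial F))
    (eval₂RingHom φ p) (X + C (Polynomial.C β))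
  have hring : (eval₂RingHom φ p).comp (Polynomial.C) = φ := RingHom.ext fun r => by simp
  have harg : (eval₂RingHom φ p) (X + C (Polynomial.C β)) = f.comp (X + C α) := by
    simp [hp, hφ, Polynomial.comp]
  rw [hring, harg] at h2
  have hcomp : Q.comp (X + C (Polynomial.C β)) = eval₂ Polynomial.C (X + C (Polynomial.C β)) Q :=
    rfl
  have hcoe : ∀ (R : Polynomial (Polynomial F)), eval₂ (φ : Polynomial F →+* Polynomial F) p R
      = (eval₂RingHom φ p) R := fun R => rfl
  rw [hcomp, hcoe, h2]

theorem key_dvd {F : Type*} [CommRing F] (Q' : Polynomial (Polynomial F)) (m : ℕ)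
    (hv : ∀ e1 e2 : ℕ, e1 + e2 < m → (Q'.coeff e2).coeff e1 = 0)
    (p : Polynomial F) (hp : p.coeff 0 = 0) :
    (X : Polynomial F) ^ m ∣ Polynomial.eval p Q' := by
  have hXp : (X : Polynomial F) ∣ p := X_dvd_iff.mpr hp
  rw [Polynomial.eval_eq_sum, Polynomial.sum]
  apply Finset.dvd_sum
  intro e2 _
  rcases le_or_gt m e2 with h | h
  · exact dvd_mul_of_dvd_right ((pow_dvd_pow X h).trans (pow_dvd_pow_of_dvd hXp e2)) _
  · have h1 : (X : Polynomial F) ^ (m - e2) ∣ Q'.coeff e2 := by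
      rw [Polynomial.X_pow_dvd_iff]
      intro i hi
      exact hv i e2 (by omega)
    have h2 : (X : Polynomial F) ^ e2 ∣ p ^ e2 := pow_dvd_pow_of_dvd hXp e2
    have : (X : Polynomial F) ^ m = X ^ (m - e2) * X ^ e2 := by
      rw [← pow_add]; congr 1; omega
    rw [this]
    exact mul_dvd_mul h1 h2

end Statement3Aux

theorem statement3 (F : Type*) [Field F] (n k m D : ℕ) (hk : 2 ≤ k) (hm : 1 ≤ m)
    (α β : Fin n → F) (hα : Function.Injective α)
    (Q : Polynomial (Polynomial F)) (hQ0 : Q ≠ 0)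
    (hQdeg : ∀ i j : ℕ, (Q.coeff j).coeff i ≠ 0 → i + (k - 1) * j ≤ D)
    (hQvanish : ∀ j : Fin n, VanishesWithMult Q (α j) (β j) m)
    (f : Polynomial F) (hf : f.natDegree ≤ k - 1)
    (t : ℕ) (ht : t = Nat.card {j : Fin n // Polynomial.eval (α j) f = β j})
    (hmt : D < m * t) :
    Polynomial.eval f Q = 0 ∧ (Polynomial.X - Polynomial.C f) ∣ Q := by
  classical
  open Polynomial Statement3Aux in
  set g : Polynomial F := Polynomial.eval f Q with hg
  -- degree bound
  have hgdeg : g.natDegree ≤ D := by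
    rw [hg, Polynomial.eval_eq_sum, Polynomial.sum]
    apply Polynomial.natDegree_sum_le_of_forall_le
    intro j hj
    have hc : Q.coeff j ≠ 0 := Polynomial.mem_support_iff.mp hj
    calc (Q.coeff j * f ^ j).natDegree
        ≤ (Q.coeff j).natDegree + (f ^ j).natDegree := Polynomial.natDegree_mul_le
      _ ≤ (Q.coeff j).natDegree + (k - 1) * j := by
          rw [Polynomial.natDegree_pow]
          have : j * f.natDegree ≤ (k - 1) * j := by
            calc j * f.natDegree ≤ j * (k - 1) := Nat.mul_le_mul_left j hf
              _ = (k - 1) * j := Nat.mul_comm _ _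
          omega
      _ ≤ D := hQdeg _ j (by
          rwa [← Polynomial.leadingCoeff, Polynomial.leadingCoeff_ne_zero])
  -- each agreement point gives multiplicity m root
  have hroot : ∀ j : Fin n, Polynomial.eval (α j) f = β j →
      (X - C (α j)) ^ m ∣ g := by
    intro j hjeq
    set p : Polynomial F := f.comp (X + C (α j)) - C (β j) with hp
    have hp0 : p.coeff 0 = 0 := by
      rw [hp, Polynomial.coeff_zero_eq_eval_zero]
      simp [hjeq]
    have h1 : (X : Polynomial F) ^ m ∣ Polynomial.eval p (taylorShift2 Q (α j) (β j)) :=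
      key_dvd _ m (hQvanish j) p hp0
    rw [← shift_eval] at h1
    have h2 := map_dvd (Polynomial.eval₂RingHom (Polynomial.C : F →+* Polynomial F)
      (X - C (α j))) h1
    have e1 : (Polynomial.eval₂RingHom (Polynomial.C : F →+* Polynomial F) (X - C (α j)))
        ((X : Polynomial F) ^ m) = (X - C (α j)) ^ m := by simp
    have e2 : (Polynomial.eval₂RingHom (Polynomial.C : F →+* Polynomial F) (X - C (α j)))
        ((Polynomial.eval f Q).comp (X + C (α j))) = g := by
      show ((Polynomial.eval f Q).comp (X + C (α j))).comp (X - C (α j)) = g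
      rw [Polynomial.comp_assoc]
      simp [hg]
    rwa [e1, e2] at h2
  -- the agreement set
  set S : Finset (Fin n) := Finset.univ.filter (fun j => Polynomial.eval (α j) f = β j) with hS
  have htS : t = S.card := by
    rw [ht, Nat.card_eq_fintype_card, Fintype.card_subtype]
  have hpair : (↑S : Set (Fin n)).Pairwise (Function.onFun IsCoprime fun j => (X - C (α j)) ^ m) :=
    fun a _ b _ hab => (Polynomial.pairwise_coprime_X_sub_C hα hab).pow
  have hdvd : (∏ j ∈ S, (X - C (α j)) ^ m) ∣ g :=
    Finset.prod_dvd_of_coprime hpair (fun j hj =>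
      hroot j (by simpa [hS] using hj))
  have hgzero : g = 0 := by
    by_contra hgne
    have hPne : ∀ j ∈ S, (X - C (α j)) ^ m ≠ 0 :=
      fun j _ => pow_ne_zero _ (Polynomial.X_sub_C_ne_zero _)
    have hPdeg : (∏ j ∈ S, (X - C (α j)) ^ m).natDegree = m * t := by
      rw [Polynomial.natDegree_prod _ _ hPne]
      simp [Polynomial.natDegree_pow, htS, Nat.mul_comm]
    have := Polynomial.natDegree_le_of_dvd hdvd hgne
    rw [hPdeg] at this
    omega
  refine ⟨hgzero, ?_⟩
  rw [Polynomial.dvd_iff_isRoot]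
  exact hgzero
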